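/- One Riccati step can be rewritten in Woodbury form: Aᵀ Π A − (1/ε) Aᵀ Π B Σ^{1/2} (I + Σ^{1/2} C Σ^{1/2})^{−1} Σ^{1/2} Bᵀ Π A = Aᵀ Π^{1/2} ( I + Π^{1/2} B Σ^{1/2} (ε I + Σ^{1/2} R Σ^{1/2})^{−1} Σ^{1/2} Bᵀ Π^{1/2} )^{−1} Π^{1/2} A, where C = (R + Bᵀ Π B)/ε. -/

import Mathlib

open Matrix Filter Topology

/-- The unique symmetric positive semidefinite square root of a positive
semidefinite real matrix (junk value `0` if the matrix is not PSD). -/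
noncomputable def msqrt {d : ℕ} (X : Matrix (Fin d) (Fin d) ℝ) :
    Matrix (Fin d) (Fin d) ℝ :=
  letI := Classical.propDecidable X.PosSemidef
  if h : X.PosSemidef then
    (h.1.eigenvectorUnitary : Matrix (Fin d) (Fin d) ℝ) * diagonal (Real.sqrt ∘ h.1.eigenvalues) *
      (star h.1.eigenvectorUnitary : Matrix (Fin d) (Fin d) ℝ)
  else 0

/-- The Frobenius norm of a real square matrix. -/
noncomputable def frob {d : ℕ} (X : Matrix (Fin d) (Fin d) ℝ) : ℝ :=
  Real.sqrt (∑ i, ∑ j, X i j ^ 2)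

/-- Data of the mutual information optimal control problem for a discrete-time
linear system `x_{k+1} = A_k x_k + B_k u_k + w_k`. -/
structure LQData (n m : ℕ) where
  ε : ℝ
  A : ℕ → Matrix (Fin n) (Fin n) ℝ
  B : ℕ → Matrix (Fin n) (Fin m) ℝ
  R : ℕ → Matrix (Fin m) (Fin m) ℝ
  F : Matrix (Fin n) (Fin n) ℝ
  Sw : ℕ → Matrix (Fin n) (Fin n) ℝ
  Sini : Matrix (Fin n) (Fin n) ℝ

namespace LQData

variable {n m : ℕ} (P : LQData n m) (T : ℕ) (Srho : ℕ → Matrix (Fin m) (Fin m) ℝ)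

/-- The backward Riccati recursion `Π_k` associated with the prior covariances
`Σ_{ρ_k}`: `Π_T = F` and
`Π_k = A_kᵀ Π_{k+1} A_k − (1/ε) A_kᵀ Π_{k+1} B_k Σ^{1/2} (I + Σ^{1/2} C_k Σ^{1/2})⁻¹ Σ^{1/2} B_kᵀ Π_{k+1} A_k`
with `C_k = (R_k + B_kᵀ Π_{k+1} B_k)/ε`. -/
noncomputable def Ric (k : ℕ) : Matrix (Fin n) (Fin n) ℝ :=
  if h : T ≤ k then P.F
  else
    let Pk := Ric (k + 1)
    let S := msqrt (Srho k)
    let C := (1 / P.ε) • (P.R k + (P.B k)ᵀ * Pk * P.B k)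
    (P.A k)ᵀ * Pk * P.A k -
      (1 / P.ε) • ((P.A k)ᵀ * Pk * P.B k * S * (1 + S * C * S)⁻¹ * S * (P.B k)ᵀ * Pk * P.A k)
termination_by T - k
decreasing_by omega

/-- `C_k = (R_k + B_kᵀ Π_{k+1} B_k)/ε`. -/
noncomputable def Ck (k : ℕ) : Matrix (Fin m) (Fin m) ℝ :=
  (1 / P.ε) • (P.R k + (P.B k)ᵀ * P.Ric T Srho (k + 1) * P.B k)

/-- `Σ_{Q_k} = ε (R_k + B_kᵀ Π_{k+1} B_k)⁻¹`. -/
noncomputable def SigQ (k : ℕ) : Matrix (Fin m) (Fin m) ℝ :=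
  P.ε • (P.R k + (P.B k)ᵀ * P.Ric T Srho (k + 1) * P.B k)⁻¹

/-- Covariance `Σ_{π_k}` of the optimal policy for the fixed prior. -/
noncomputable def SigPi (k : ℕ) : Matrix (Fin m) (Fin m) ℝ :=
  msqrt (Srho k) * (1 + msqrt (Srho k) * P.Ck T Srho k * msqrt (Srho k))⁻¹ * msqrt (Srho k)

/-- Feedback gain `P_k = −(1/ε) Σ_{π_k} B_kᵀ Π_{k+1} A_k`. -/
noncomputable def Pgain (k : ℕ) : Matrix (Fin m) (Fin n) ℝ :=
  -((1 / P.ε) • (P.SigPi T Srho k * (P.B k)ᵀ * P.Ric T Srho (k + 1) * P.A k))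

/-- Forward state covariance recursion under the optimal policy. -/
noncomputable def Sigx : ℕ → Matrix (Fin n) (Fin n) ℝ
  | 0 => P.Sini
  | k + 1 =>
    (P.A k + P.B k * P.Pgain T Srho k) * Sigx k *
        (P.A k + P.B k * P.Pgain T Srho k)ᵀ +
      P.B k * P.SigPi T Srho k * (P.B k)ᵀ + P.Sw k

/-- The standard LQR Riccati recursion `Π̌_k`. -/
noncomputable def RicLQR (k : ℕ) : Matrix (Fin n) (Fin n) ℝ :=
  if h : T ≤ k then P.F
  else
    let Pk := RicLQR (k + 1)
    (P.A k)ᵀ * Pk * P.A k -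
      (P.A k)ᵀ * Pk * P.B k * (P.R k + (P.B k)ᵀ * Pk * P.B k)⁻¹ * (P.B k)ᵀ * Pk * P.A k
termination_by T - k
decreasing_by omega

/-- `Π̂_k = A_kᵀ ⋯ A_{T−1}ᵀ F A_{T−1} ⋯ A_k`. -/
noncomputable def RicHat (k : ℕ) : Matrix (Fin n) (Fin n) ℝ :=
  if h : T ≤ k then P.F
  else (P.A k)ᵀ * RicHat (k + 1) * P.A k
termination_by T - k
decreasing_by omega

/-- `Σ_{w_{k−1}}` with the convention `Σ_{w_{−1}} := Σ_{x_ini}`. -/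
noncomputable def Swm1 (k : ℕ) : Matrix (Fin n) (Fin n) ℝ :=
  if k = 0 then P.Sini else P.Sw (k - 1)

/-- The matrix `M̌_k` from the sufficient condition for stochastic optimal policies. -/
noncomputable def Mcheck (k : ℕ) : Matrix (Fin m) (Fin m) ℝ :=
  (P.R k + (P.B k)ᵀ * P.RicHat T (k + 1) * P.B k)⁻¹ *
      ((P.B k)ᵀ * P.RicLQR T (k + 1) * P.A k * P.Swm1 k * (P.A k)ᵀ *
        P.RicLQR T (k + 1) * P.B k) *
      (P.R k + (P.B k)ᵀ * P.RicHat T (k + 1) * P.B k)⁻¹ -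
    P.ε • (P.R k + (P.B k)ᵀ * P.RicLQR T (k + 1) * P.B k)⁻¹

/-- State covariance under the zero control input. -/
noncomputable def SigxZero : ℕ → Matrix (Fin n) (Fin n) ℝ
  | 0 => P.Sini
  | k + 1 => P.A k * SigxZero k * (P.A k)ᵀ + P.Sw k

/-- The matrix `M̂_k^zero` from the sufficient condition for deterministic optimal policies. -/
noncomputable def MhatZero (k : ℕ) : Matrix (Fin m) (Fin m) ℝ :=
  (P.R k + (P.B k)ᵀ * P.RicLQR T (k + 1) * P.B k)⁻¹ *
      ((P.B k)ᵀ * P.RicHat T (k + 1) * P.A k * P.SigxZero k * (P.A k)ᵀ *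
        P.RicHat T (k + 1) * P.B k) *
      (P.R k + (P.B k)ᵀ * P.RicLQR T (k + 1) * P.B k)⁻¹ -
    P.ε • (P.R k + (P.B k)ᵀ * P.RicHat T (k + 1) * P.B k)⁻¹


/-- The backward recursion `r_k` for the mean offset:
`r_T = 0` and `r_k = A_k⁻¹ r_{k+1} − Π_k⁻¹ A_kᵀ Π_{k+1} B_k (I + Σ_{ρ_k} C_k)⁻¹ μ_{ρ_k}`. -/
noncomputable def rvec (μ : ℕ → Fin m → ℝ) (k : ℕ) : Fin n → ℝ :=
  if h : T ≤ k then 0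
  else
    ((P.A k)⁻¹).mulVec (rvec μ (k + 1)) -
      ((P.Ric T Srho k)⁻¹ * ((P.A k)ᵀ * P.Ric T Srho (k + 1) * P.B k *
        (1 + Srho k * P.Ck T Srho k)⁻¹)).mulVec (μ k)
termination_by T - k
decreasing_by omega

/-- `Θ_k = ε C_k − ε C_k Σ_{π_k} C_k − (I − C_k Σ_{π_k}) B_kᵀ Π_{k+1} A_k Π_k⁻¹ A_kᵀ Π_{k+1} B_k (I − Σ_{π_k} C_k)`. -/
noncomputable def Theta (k : ℕ) : Matrix (Fin m) (Fin m) ℝ :=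
  P.ε • P.Ck T Srho k - P.ε • (P.Ck T Srho k * P.SigPi T Srho k * P.Ck T Srho k) -
    (1 - P.Ck T Srho k * P.SigPi T Srho k) *
      ((P.B k)ᵀ * P.Ric T Srho (k + 1) * P.A k * (P.Ric T Srho k)⁻¹ *
        ((P.A k)ᵀ * P.Ric T Srho (k + 1) * P.B k)) *
      (1 - P.SigPi T Srho k * P.Ck T Srho k)

end LQData

/-- Extend a `T`-tuple of matrices to a function on `ℕ` (by zero). -/
def extT {m : ℕ} (T : ℕ) (σ : Fin T → Matrix (Fin m) (Fin m) ℝ) :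
    ℕ → Matrix (Fin m) (Fin m) ℝ :=
  fun k => if h : k < T then σ ⟨k, h⟩ else 0


/-- Extend a `T`-tuple of vectors to a function on `ℕ` (by zero). -/
def extV {m : ℕ} (T : ℕ) (μ : Fin T → Fin m → ℝ) : ℕ → Fin m → ℝ :=
  fun k => if h : k < T then μ ⟨k, h⟩ else 0

namespace LQData

variable {n m : ℕ} (P : LQData n m) (T : ℕ)

/-- The reduced objective `J̌` as a function of the `T`-tuple of prior covariances. -/
noncomputable def Jcheck (σ : Fin T → Matrix (Fin m) (Fin m) ℝ) : ℝ :=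
  (1 / 2) * ((P.Ric T (extT T σ) 0 * P.Sini).trace +
    ∑ k : Fin T,
      (P.ε * Real.log ((extT T σ k + P.SigQ T (extT T σ) k).det / (P.SigQ T (extT T σ) k).det) +
        (P.Ric T (extT T σ) (k + 1) * P.Sw k).trace))

/-- `L_k = (Σ_{Q_k} + Σ_{ρ_k})⁻¹`. -/
noncomputable def Lmat (Srho : ℕ → Matrix (Fin m) (Fin m) ℝ) (k : ℕ) :
    Matrix (Fin m) (Fin m) ℝ :=
  (P.SigQ T Srho k + Srho k)⁻¹

/-- `E_k = (1/ε) Σ_{Q_k} B_kᵀ Π_{k+1} A_k`. -/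
noncomputable def Emat (Srho : ℕ → Matrix (Fin m) (Fin m) ℝ) (k : ℕ) :
    Matrix (Fin m) (Fin n) ℝ :=
  (1 / P.ε) • (P.SigQ T Srho k * (P.B k)ᵀ * P.Ric T Srho (k + 1) * P.A k)

/-- `J̌'_k = (ε/2) L_k (Σ_{ρ_k} + Σ_{Q_k} − E_k Σ_{x_k} E_kᵀ) L_k`. -/
noncomputable def Jprime (Srho : ℕ → Matrix (Fin m) (Fin m) ℝ) (k : ℕ) :
    Matrix (Fin m) (Fin m) ℝ :=
  (P.ε / 2) • (P.Lmat T Srho k *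
    (Srho k + P.SigQ T Srho k - P.Emat T Srho k * P.Sigx T Srho k * (P.Emat T Srho k)ᵀ) *
    P.Lmat T Srho k)

/-- The alternating-optimization update map `𝒯` on `T`-tuples of prior covariances:
`𝒯(σ)_k = Σ_{π_k} + P_k Σ_{x_k} P_kᵀ`. -/
noncomputable def Tmap (σ : Fin T → Matrix (Fin m) (Fin m) ℝ) :
    Fin T → Matrix (Fin m) (Fin m) ℝ :=
  fun k =>
    P.SigPi T (extT T σ) k +
      P.Pgain T (extT T σ) k * P.Sigx T (extT T σ) k * (P.Pgain T (extT T σ) k)ᵀ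

/-- The objective `J` as a function of the prior means, for fixed prior covariances:
`J(μ) = (1/2)( r_0ᵀ Π_0 r_0 + Σ_k μ_{ρ_k}ᵀ Θ_k μ_{ρ_k} )`. -/
noncomputable def Jmean (Srho : ℕ → Matrix (Fin m) (Fin m) ℝ) (μ : Fin T → Fin m → ℝ) : ℝ :=
  (1 / 2) *
    (P.rvec T Srho (extV T μ) 0 ⬝ᵥ (P.Ric T Srho 0).mulVec (P.rvec T Srho (extV T μ) 0) +
      ∑ k : Fin T, μ k ⬝ᵥ (P.Theta T Srho k).mulVec (μ k))

end LQData

open Matrix Filter Topology LQData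

lemma msqrt_herm {d : ℕ} (X : Matrix (Fin d) (Fin d) ℝ) (hX : X.PosSemidef) :
    (msqrt X)ᴴ = msqrt X := by
  rw [msqrt, dif_pos hX]
  simp [Matrix.conjTranspose_mul, Matrix.mul_assoc]
  simp only [← conjTranspose_eq_transpose_of_trivial, star_eq_conjTranspose,
    conjTranspose_conjTranspose]

lemma msqrt_mul_self {d : ℕ} (X : Matrix (Fin d) (Fin d) ℝ) (hX : X.PosSemidef) :
    msqrt X * msqrt X = X := by
  rw [msqrt, dif_pos hX]
  have hU := Unitary.coe_star_mul_self hX.1.eigenvectorUnitary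
  calc _ = (hX.1.eigenvectorUnitary : Matrix (Fin d) (Fin d) ℝ) *
        (diagonal (Real.sqrt ∘ hX.1.eigenvalues) *
          ((star hX.1.eigenvectorUnitary : Matrix (Fin d) (Fin d) ℝ) *
            (hX.1.eigenvectorUnitary : Matrix (Fin d) (Fin d) ℝ)) *
          diagonal (Real.sqrt ∘ hX.1.eigenvalues)) *
        (star hX.1.eigenvectorUnitary : Matrix (Fin d) (Fin d) ℝ) := by
        simp only [Matrix.mul_assoc]
    _ = (hX.1.eigenvectorUnitary : Matrix (Fin d) (Fin d) ℝ) *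
        diagonal (RCLike.ofReal ∘ hX.1.eigenvalues) *
        (star hX.1.eigenvectorUnitary : Matrix (Fin d) (Fin d) ℝ) := by
        rw [hU, Matrix.mul_one, diagonal_mul_diagonal]
        congr 2
        funext i j
        simp [diagonal_apply, Real.mul_self_sqrt (hX.eigenvalues_nonneg i)]
    _ = X := by
        conv_rhs => rw [hX.1.spectral_theorem]
        simp

theorem riccati_step_woodbury {n m : ℕ} (hn : 1 ≤ n) (hm : 1 ≤ m) (ε : ℝ) (hε : 0 < ε)
    (A : Matrix (Fin n) (Fin n) ℝ) (B : Matrix (Fin n) (Fin m) ℝ)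
    (R : Matrix (Fin m) (Fin m) ℝ) (hR : R.PosDef)
    (Pm : Matrix (Fin n) (Fin n) ℝ) (hPm : Pm.PosSemidef)
    (Sg : Matrix (Fin m) (Fin m) ℝ) (hSg : Sg.PosSemidef) :
    Aᵀ * Pm * A -
        (1 / ε) • (Aᵀ * Pm * B * msqrt Sg *
          (1 + msqrt Sg * ((1 / ε) • (R + Bᵀ * Pm * B)) * msqrt Sg)⁻¹ *
          msqrt Sg * Bᵀ * Pm * A) =
      Aᵀ * msqrt Pm *
        (1 + msqrt Pm * B * msqrt Sg *
          (ε • (1 : Matrix (Fin m) (Fin m) ℝ) + msqrt Sg * R * msqrt Sg)⁻¹ *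
          msqrt Sg * Bᵀ * msqrt Pm)⁻¹ * msqrt Pm * A := by
  set S := msqrt Sg with hSd
  set Q := msqrt Pm with hQd
  have hSsym : Sᵀ = S := by
    rw [← conjTranspose_eq_transpose_of_trivial, msqrt_herm Sg hSg]
  have hQsym : Qᵀ = Q := by
    rw [← conjTranspose_eq_transpose_of_trivial, msqrt_herm Pm hPm]
  have hQQ : Q * Q = Pm := msqrt_mul_self Pm hPm
  have hSRS : (S * R * S).PosSemidef := by
    have := hR.posSemidef.conjTranspose_mul_mul_same S
    rwa [msqrt_herm Sg hSg] at this
  clear_value S Q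
  clear hSd hQd
  set K := S * Bᵀ * Q with hK
  have hKt : Kᵀ = Q * B * S := by
    rw [hK, transpose_mul, transpose_mul, hSsym, hQsym, transpose_transpose, ← Matrix.mul_assoc]
  have hKK : (K * Kᵀ).PosSemidef := by
    have := posSemidef_self_mul_conjTranspose K
    rwa [conjTranspose_eq_transpose_of_trivial] at this
  clear_value K
  set D := ε • (1 : Matrix (Fin m) (Fin m) ℝ) + S * R * S with hD
  have hε1 : (ε • (1 : Matrix (Fin m) (Fin m) ℝ)).PosDef := by
    rw [smul_one_eq_diagonal]
    exact posDef_diagonal_iff.mpr fun _ => hε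
  have hDpd : D.PosDef := hε1.add_posSemidef hSRS
  clear_value D
  set M := D + K * Kᵀ with hM
  have hMpd : M.PosDef := hDpd.add_posSemidef hKK
  clear_value M
  have hDD : D⁻¹ * D = 1 := nonsing_inv_mul D hDpd.det_pos.ne'.isUnit
  have hMM : M * M⁻¹ = 1 := mul_nonsing_inv M hMpd.det_pos.ne'.isUnit
  -- Woodbury: (1 + Kᵀ D⁻¹ K)⁻¹ = 1 - Kᵀ M⁻¹ K
  have e1 : D⁻¹ * (K * Kᵀ) * M⁻¹ = D⁻¹ - M⁻¹ := by
    have h2 : K * Kᵀ = M - D := by rw [hM]; abel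
    rw [h2, mul_sub, sub_mul, mul_assoc, hMM, mul_one, hDD, one_mul]
  have key : (1 + Kᵀ * D⁻¹ * K) * (1 - Kᵀ * M⁻¹ * K) = 1 := by
    have h4 : Kᵀ * D⁻¹ * K * (Kᵀ * M⁻¹ * K) = Kᵀ * D⁻¹ * K - Kᵀ * M⁻¹ * K := by
      have h5 : Kᵀ * D⁻¹ * K * (Kᵀ * M⁻¹ * K) = Kᵀ * (D⁻¹ * (K * Kᵀ) * M⁻¹) * K := by
        simp only [Matrix.mul_assoc]
      rw [h5, e1, Matrix.mul_sub, Matrix.sub_mul]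
    rw [mul_sub, mul_one, add_mul, one_mul, h4]
    abel
  have hNinv : (1 + Kᵀ * D⁻¹ * K)⁻¹ = 1 - Kᵀ * M⁻¹ * K := inv_eq_right_inv key
  -- RHS inner matrix equals 1 + Kᵀ D⁻¹ K
  have hRHSin : 1 + Q * B * S * D⁻¹ * S * Bᵀ * Q = 1 + Kᵀ * D⁻¹ * K := by
    rw [hKt, hK]; simp only [Matrix.mul_assoc]
  -- LHS inner matrix
  have hKKe : K * Kᵀ = S * (Bᵀ * Pm * B) * S := by
    rw [hKt, hK, ← hQQ]; simp only [Matrix.mul_assoc]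
  have hLin : 1 + S * ((1 / ε) • (R + Bᵀ * Pm * B)) * S = (1 / ε) • M := by
    rw [hM, hD, hKKe]
    have h3 : S * (R + Bᵀ * Pm * B) * S = S * R * S + S * (Bᵀ * Pm * B) * S := by
      noncomm_ring
    rw [mul_smul_comm, smul_mul_assoc, h3]
    rw [smul_add, smul_add, smul_add, smul_smul, one_div, inv_mul_cancel₀ hε.ne', one_smul]
    abel
  have hLinv : (1 + S * ((1 / ε) • (R + Bᵀ * Pm * B)) * S)⁻¹ = ε • M⁻¹ := by
    rw [hLin]
    apply inv_eq_right_inv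
    rw [smul_mul_assoc, mul_smul_comm, smul_smul, hMM, one_div, inv_mul_cancel₀ hε.ne',
      one_smul]
  rw [hLinv, hRHSin, hNinv]
  have hsc : (1 / ε) • (Aᵀ * Pm * B * S * (ε • M⁻¹) * S * Bᵀ * Pm * A)
      = Aᵀ * Pm * B * S * M⁻¹ * S * Bᵀ * Pm * A := by
    simp only [Matrix.mul_smul, Matrix.smul_mul, smul_smul]
    rw [one_div, inv_mul_cancel₀ hε.ne', one_smul]
  rw [hsc, hKt, hK, ← hQQ]
  simp only [Matrix.mul_sub, Matrix.sub_mul, Matrix.mul_one, Matrix.one_mul, Matrix.mul_assoc]
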